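/- For every integer n ≥ 2, with α = 3·⌈log n⌉, the real number q_n = Σ_{k=1}^{n} C(n, k) · C(n, k−1) · ((k−1)/n)^{kα} satisfies q_n ≤ 1/2. -/

import Mathlib

open Nat Real Finset


lemma pade_log {x : ℝ} (hx0 : 0 < x) (hx1 : x < 1) :
    Real.log x ≤ -(2 * (1 - x) / (1 + x)) := by
  set g : ℝ → ℝ := fun y => 2 * (y - 1) / (y + 1) - Real.log y with hg
  have key : AntitoneOn g (Set.Icc x 1) := by
    apply antitoneOn_of_deriv_nonpos (convex_Icc x 1)
    · apply ContinuousOn.sub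
      · apply ContinuousOn.div
        · fun_prop
        · fun_prop
        · intro y hy; simp only [Set.mem_Icc] at hy; nlinarith [hy.1]
      · apply ContinuousOn.log (by fun_prop)
        intro y hy; simp only [Set.mem_Icc] at hy; nlinarith [hy.1]
    · rw [interior_Icc]
      intro y hy
      apply DifferentiableAt.differentiableWithinAt
      have hy1 : y ≠ 0 := by rcases hy with ⟨h1, h2⟩; nlinarith
      have hy2 : y + 1 ≠ 0 := by rcases hy with ⟨h1, h2⟩; nlinarith
      fun_prop (disch := assumption)
    · rw [interior_Icc]
      intro y hy
      rcases hy with ⟨h1, h2⟩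
      have hy0 : 0 < y := lt_trans hx0 h1
      have hy2 : (0:ℝ) < y + 1 := by linarith
      have hd : HasDerivAt g (4 / (y + 1) ^ 2 - 1 / y) y := by
        have d1 : HasDerivAt (fun y : ℝ => 2 * (y - 1) / (y + 1))
            ((2 * (y + 1) - 2 * (y - 1) * 1) / (y + 1) ^ 2) y := by
          have : HasDerivAt (fun y : ℝ => 2 * (y - 1)) 2 y := by
            simpa using ((hasDerivAt_id y).sub_const 1).const_mul 2
          exact this.div ((hasDerivAt_id y).add_const 1) (ne_of_gt hy2)
        have d2 : HasDerivAt Real.log (1 / y) y := by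
          simpa [one_div] using Real.hasDerivAt_log (ne_of_gt hy0)
        have hnum : (2 * (y + 1) - 2 * (y - 1) * 1) = 4 := by ring
        have := d1.sub d2
        rw [hnum] at this
        exact this
      rw [hd.deriv]
      rw [sub_nonpos, div_le_div_iff₀ (by positivity) hy0]
      nlinarith
  have h1 : g 1 ≤ g x := key (Set.mem_Icc.2 ⟨le_refl x, le_of_lt hx1⟩)
      (Set.mem_Icc.2 ⟨le_of_lt hx1, le_refl 1⟩) (le_of_lt hx1)
  simp only [hg, Real.log_one] at h1
  have : -(2 * (1 - x) / (1 + x)) = 2 * (x - 1) / (x + 1) := by ring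
  rw [this]
  linarith

lemma fact_geom : ∀ k : ℕ, 2 ≤ k → 2 * 6 ^ (k - 2) ≤ k ! * (k - 1)! := by
  intro k hk
  induction k, hk using Nat.le_induction with
  | base => norm_num [Nat.factorial]
  | succ k hk ih =>
    have h1 : (k + 1) - 2 = (k - 2) + 1 := by omega
    have h2 : (k + 1)! = (k + 1) * k ! := Nat.factorial_succ k
    have h3 : k ! = k * (k - 1)! := by
      cases k with
      | zero => omega
      | succ p => simp [Nat.factorial_succ]
    calc 2 * 6 ^ (k + 1 - 2) = 6 * (2 * 6 ^ (k - 2)) := by rw [h1]; ring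
    _ ≤ 6 * (k ! * (k - 1)!) := by exact Nat.mul_le_mul_left 6 ih
    _ ≤ ((k + 1) * k) * (k ! * (k - 1)!) := by
        apply Nat.mul_le_mul_right
        nlinarith
    _ = (k + 1)! * ((k + 1) - 1)! := by
        rw [h2]
        simp only [Nat.add_sub_cancel]
        rw [h3]
        ring

noncomputable def wfun (j : ℕ) : ℝ := if j ≤ 1 then 1 else (1/2) * (1/6) ^ (j - 2)

lemma wfun_nonneg (j : ℕ) : 0 ≤ wfun j := by
  unfold wfun; split <;> positivity

lemma wfun_ge (j : ℕ) (hj : 1 ≤ j) : (1 : ℝ) / (j ! * (j - 1)!) ≤ wfun j := by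
  unfold wfun
  rcases eq_or_lt_of_le hj with h | h
  · simp [← h, Nat.factorial]
  · have hj2 : 2 ≤ j := h
    rw [if_neg (by omega)]
    have hfg := fact_geom j hj2
    have hc : ((2 * 6 ^ (j - 2) : ℕ) : ℝ) ≤ (j ! : ℝ) * ((j - 1)! : ℝ) := by
      exact_mod_cast hfg
    have h2 : (0:ℝ) < ((2 * 6 ^ (j - 2) : ℕ) : ℝ) := by positivity
    calc (1:ℝ) / (↑j ! * ↑(j - 1)!) ≤ 1 / ((2 * 6 ^ (j - 2) : ℕ) : ℝ) :=
          one_div_le_one_div_of_le h2 hc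
    _ = 1 / 2 * (1 / 6) ^ (j - 2) := by
        rw [one_div_pow]
        push_cast
        ring

lemma geo_sum (m : ℕ) : ∑ i ∈ range m, ((1:ℝ)/6) ^ i ≤ 6/5 := by
  rw [geom_sum_eq (by norm_num : ((1:ℝ)/6) ≠ 1)]
  have h : (0:ℝ) ≤ (1/6 : ℝ) ^ m := by positivity
  rw [div_le_iff_of_neg (by norm_num : ((1:ℝ)/6 - 1) < 0)]
  nlinarith

lemma wfun_sum (m : ℕ) : ∑ i ∈ range m, wfun (i + 1) ≤ 8/5 := by
  rcases Nat.eq_zero_or_pos m with h | h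
  · simp [h]; norm_num
  · obtain ⟨m', rfl⟩ : ∃ m', m = m' + 1 := ⟨m - 1, by omega⟩
    rw [Finset.sum_range_succ']
    have h0 : wfun (0 + 1) = 1 := by unfold wfun; norm_num
    have h1 : ∀ i, wfun (i + 1 + 1) = (1/2) * (1/6) ^ i := by
      intro i; unfold wfun; rw [if_neg (by omega)]; congr 1
    rw [h0]
    calc (∑ i ∈ range m', wfun (i + 1 + 1)) + 1
        = (1/2) * (∑ i ∈ range m', ((1:ℝ)/6) ^ i) + 1 := by
          rw [Finset.mul_sum]
          exact congrArg (· + 1) (Finset.sum_congr rfl fun i _ => h1 i)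
    _ ≤ (1/2) * (6/5) + 1 := by nlinarith [geo_sum m']
    _ ≤ 8/5 := by norm_num

lemma termA (n k : ℕ) (hn : 2 ≤ n) (hk : 2 ≤ k) (h2k : 2 * k ≤ n) :
    (n.choose k : ℝ) * (n.choose (k - 1) : ℝ) *
      (((k - 1 : ℕ) : ℝ) / (n : ℝ)) ^ (k * (3 * ⌈Real.log n⌉₊)) ≤
    (1 / (n : ℝ)) * (1 / 2 * (1 / 6) ^ (k - 2)) := by
  have hN : (0:ℝ) < n := by positivity
  have hN1 : (1:ℝ) < n := by exact_mod_cast hn.trans_lt' one_lt_two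
  set L := Real.log n with hLdef
  have hL : 0 < L := Real.log_pos hN1
  set m := k * (3 * ⌈L⌉₊) with hm
  have hceil : L ≤ (⌈L⌉₊ : ℝ) := Nat.le_ceil L
  have hmge : 3 * (k:ℝ) * L ≤ (m:ℝ) := by
    push_cast [hm]
    have hk0 : (0:ℝ) ≤ (k:ℝ) := by positivity
    nlinarith
  set x : ℝ := ((k - 1 : ℕ) : ℝ) / (n : ℝ) with hx
  have hk1 : (1:ℝ) ≤ ((k - 1 : ℕ) : ℝ) := by exact_mod_cast (by omega : 1 ≤ k - 1)
  have hx0 : 0 < x := by rw [hx]; positivity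
  have hxh : x ≤ 1 / 2 := by
    rw [hx, div_le_iff₀ hN]
    have : ((2 * (k - 1) : ℕ) : ℝ) ≤ (n : ℝ) := by exact_mod_cast (by omega : 2 * (k-1) ≤ n)
    push_cast at this
    linarith
  have hlx : Real.log x ≤ -Real.log 2 := by
    have h1 : Real.log x ≤ Real.log (1/2) := Real.log_le_log hx0 hxh
    rwa [show (1:ℝ)/2 = 2⁻¹ by norm_num, Real.log_inv] at h1
  have hl2 : (0.6931471803:ℝ) < Real.log 2 := Real.log_two_gt_d9
  have hlx0 : Real.log x ≤ 0 := by linarith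
  have key : (m:ℝ) * Real.log x ≤ -(2 * (k:ℝ)) * L := by
    have h1 : (m:ℝ) * Real.log x ≤ (3 * (k:ℝ) * L) * Real.log x :=
      mul_le_mul_of_nonpos_right hmge hlx0
    have h2 : (3 * (k:ℝ) * L) * Real.log x ≤ (3 * (k:ℝ) * L) * (-Real.log 2) := by
      apply mul_le_mul_of_nonneg_left hlx
      positivity
    have hkL : 0 ≤ (k:ℝ) * L := by positivity
    nlinarith
  have hxm : x ^ m ≤ ((n:ℝ) ^ (2 * k))⁻¹ := by
    have e1 : x ^ m = Real.exp ((m:ℝ) * Real.log x) := by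
      rw [Real.exp_nat_mul, Real.exp_log hx0]
    have e2 : ((n:ℝ) ^ (2 * k))⁻¹ = Real.exp (-(2 * (k:ℝ)) * L) := by
      rw [show -(2 * (k:ℝ)) * L = -((2*k : ℕ) * L) by push_cast; ring, Real.exp_neg,
        Real.exp_nat_mul, Real.exp_log hN]
    rw [e1, e2]
    exact Real.exp_le_exp.mpr key
  have c1 : (n.choose k : ℝ) ≤ (n:ℝ) ^ k / (k ! : ℝ) := by
    have := Nat.choose_le_pow_div (α := ℝ) k n
    push_cast at this ⊢
    exact this
  have c2 : (n.choose (k-1) : ℝ) ≤ (n:ℝ) ^ (k-1) / ((k-1)! : ℝ) := by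
    have := Nat.choose_le_pow_div (α := ℝ) (k-1) n
    push_cast at this ⊢
    exact this
  have step : (n.choose k : ℝ) * (n.choose (k - 1) : ℝ) * x ^ m ≤
      ((n:ℝ) ^ k / (k ! : ℝ)) * ((n:ℝ) ^ (k-1) / ((k-1)! : ℝ)) * ((n:ℝ) ^ (2 * k))⁻¹ := by
    apply mul_le_mul
    · apply mul_le_mul c1 c2 (by positivity) (by positivity)
    · exact hxm
    · positivity
    · positivity
  have hfk : (0:ℝ) < (k ! : ℝ) := by exact_mod_cast Nat.factorial_pos k
  have hfk1 : (0:ℝ) < ((k-1)! : ℝ) := by exact_mod_cast Nat.factorial_pos (k-1)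
  have hpow : (n:ℝ) ^ k * (n:ℝ) ^ (k-1) * (n:ℝ) = (n:ℝ) ^ (2*k) := by
    rw [← pow_add, ← pow_succ]
    congr 1
    omega
  have heq : ((n:ℝ) ^ k / (k ! : ℝ)) * ((n:ℝ) ^ (k-1) / ((k-1)! : ℝ)) * ((n:ℝ) ^ (2 * k))⁻¹ =
      (1 / (n:ℝ)) * (1 / ((k ! : ℝ) * ((k-1)! : ℝ))) := by
    rw [← hpow]
    field_simp
  have hwge : (1:ℝ) / ((k ! : ℝ) * ((k-1)! : ℝ)) ≤ 1 / 2 * (1 / 6) ^ (k - 2) := by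
    have h := wfun_ge k (by omega)
    unfold wfun at h
    rw [if_neg (by omega)] at h
    push_cast at h
    exact h
  calc (n.choose k : ℝ) * (n.choose (k - 1) : ℝ) * x ^ m
      ≤ ((n:ℝ) ^ k / (k ! : ℝ)) * ((n:ℝ) ^ (k-1) / ((k-1)! : ℝ)) * ((n:ℝ) ^ (2 * k))⁻¹ := step
    _ = (1 / (n:ℝ)) * (1 / ((k ! : ℝ) * ((k-1)! : ℝ))) := heq
    _ ≤ (1 / (n:ℝ)) * (1 / 2 * (1 / 6) ^ (k - 2)) := by
        apply mul_le_mul_of_nonneg_left hwge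
        positivity

set_option maxHeartbeats 1000000 in
lemma termB (n k : ℕ) (hn : 3 ≤ n) (hkn : k ≤ n) (h2k : n + 1 ≤ 2 * k) :
    (n.choose k : ℝ) * (n.choose (k - 1) : ℝ) *
      (((k - 1 : ℕ) : ℝ) / (n : ℝ)) ^ (k * (3 * ⌈Real.log n⌉₊)) ≤
    (1 / (n : ℝ) ^ 2) * wfun (n + 1 - k) := by
  have hN : (0:ℝ) < n := by positivity
  have hN1 : (1:ℝ) < n := by exact_mod_cast (by omega : 1 < n)
  set L := Real.log n with hLdef
  have hL : 0 < L := Real.log_pos hN1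
  set m := k * (3 * ⌈L⌉₊) with hm
  have hceil : L ≤ (⌈L⌉₊ : ℝ) := Nat.le_ceil L
  clear_value L
  have hk2 : 2 ≤ k := by omega
  have hmge : 3 * (k:ℝ) * L ≤ (m:ℝ) := by
    push_cast [hm]
    have hk0 : (0:ℝ) ≤ (k:ℝ) := by positivity
    nlinarith
  clear_value m
  set j := n + 1 - k with hjdef
  clear_value j
  have hj1 : 1 ≤ j := by omega
  have hjk : j + k = n + 1 := by omega
  have h2j : 2 * j ≤ n + 1 := by omega
  have hk1j : k - 1 = n - j := by omega
  have hnj1 : 1 ≤ n - j := by omega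
  -- choose symmetry
  have e1 : n.choose k = n.choose (j - 1) := by
    rw [← Nat.choose_symm hkn]
    congr 1
    omega
  have e2 : n.choose (k - 1) = n.choose j := by
    rw [← Nat.choose_symm (show k - 1 ≤ n by omega)]
    congr 1
    omega
  -- real versions of j, k
  set J : ℝ := (j : ℝ) with hJdef
  set K : ℝ := (k : ℝ) with hKdef
  clear_value J K
  have hJ1 : (1:ℝ) ≤ J := by rw [hJdef]; exact_mod_cast hj1
  have hJN : J ≤ (n:ℝ) := by rw [hJdef]; exact_mod_cast (by omega : j ≤ n)
  have h2JN : 2 * J ≤ (n:ℝ) + 1 := by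
    rw [hJdef]
    have : ((2 * j : ℕ) : ℝ) ≤ ((n + 1 : ℕ) : ℝ) := by exact_mod_cast h2j
    push_cast at this
    linarith
  have hKJ : K = (n:ℝ) + 1 - J := by
    rw [hKdef, hJdef]
    have : ((j + k : ℕ) : ℝ) = ((n + 1 : ℕ) : ℝ) := by exact_mod_cast hjk
    push_cast at this
    linarith
  set x : ℝ := ((k - 1 : ℕ) : ℝ) / (n : ℝ) with hx
  clear_value x
  have hxval : ((k - 1 : ℕ) : ℝ) = (n:ℝ) - J := by
    rw [hk1j, hJdef]
    push_cast [Nat.cast_sub (by omega : j ≤ n)]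
    ring
  have hx0 : 0 < x := by
    rw [hx, hxval]
    apply div_pos _ hN
    have : (1:ℝ) ≤ (n:ℝ) - J := by
      have := hnj1
      have hc : ((1:ℕ):ℝ) ≤ ((n - j : ℕ) : ℝ) := by exact_mod_cast hnj1
      rw [Nat.cast_sub (by omega : j ≤ n), Nat.cast_one] at hc
      rw [hJdef]
      exact hc
    linarith
  have hx1 : x < 1 := by
    rw [hx, hxval, div_lt_one hN]
    linarith
  have hD : (0:ℝ) < 2 * (n:ℝ) - J := by linarith
  have hpade := pade_log hx0 hx1
  have hxeq : -(2 * (1 - x) / (1 + x)) = -(2 * J / (2 * (n:ℝ) - J)) := by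
    have h1 : ((n:ℝ)) ≠ 0 := ne_of_gt hN
    have ha : 1 - x = J / (n:ℝ) := by
      rw [hx, hxval]
      field_simp
      ring
    have hb : 1 + x = (2 * (n:ℝ) - J) / (n:ℝ) := by
      rw [hx, hxval]
      field_simp
      ring
    rw [ha, hb, neg_inj, div_eq_div_iff (ne_of_gt (div_pos hD hN)) (ne_of_gt hD)]
    ring
  rw [hxeq] at hpade
  have hlx0 : Real.log x ≤ 0 := by
    apply hpade.trans
    rw [neg_nonpos]
    positivity
  have halg : (2 * J + 1) * (2 * (n:ℝ) - J) ≤ 6 * K * J := by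
    nlinarith [mul_nonneg (sub_nonneg.2 hJ1) (by linarith : (0:ℝ) ≤ (n:ℝ) + 1 - 2 * J)]
  have key : (m:ℝ) * Real.log x ≤ -(((2 * j + 1 : ℕ) : ℝ) * L) := by
    have h1 : (m:ℝ) * Real.log x ≤ (3 * K * L) * Real.log x :=
      mul_le_mul_of_nonpos_right hmge hlx0
    have h2 : (3 * K * L) * Real.log x ≤ (3 * K * L) * (-(2 * J / (2 * (n:ℝ) - J))) := by
      apply mul_le_mul_of_nonneg_left hpade
      have : (0:ℝ) ≤ K := by rw [hKJ]; linarith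
      positivity
    have h3 : (3 * K * L) * (-(2 * J / (2 * (n:ℝ) - J))) ≤ -(((2 * j + 1 : ℕ) : ℝ) * L) := by
      have hcast : ((2 * j + 1 : ℕ) : ℝ) = 2 * J + 1 := by push_cast [hJdef]; ring
      rw [hcast, show (3 * K * L) * (-(2 * J / (2 * (n:ℝ) - J))) = -(6 * K * J * L / (2 * (n:ℝ) - J)) by ring]
      rw [neg_le_neg_iff, le_div_iff₀ hD]
      have hh : (2*J+1)*(2*(n:ℝ)-J)*L ≤ 6*K*J*L := mul_le_mul_of_nonneg_right halg hL.le
      calc (2*J+1)*L*(2*(n:ℝ)-J) = (2*J+1)*(2*(n:ℝ)-J)*L := by ring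
        _ ≤ 6*K*J*L := hh
    linarith
  have hxm : x ^ m ≤ ((n:ℝ) ^ (2 * j + 1))⁻¹ := by
    have e3 : x ^ m = Real.exp ((m:ℝ) * Real.log x) := by
      rw [Real.exp_nat_mul, Real.exp_log hx0]
    have e4 : ((n:ℝ) ^ (2 * j + 1))⁻¹ = Real.exp (-(((2 * j + 1 : ℕ) : ℝ) * L)) := by
      rw [hLdef, Real.exp_neg, Real.exp_nat_mul, Real.exp_log hN]
    rw [e3, e4]
    exact Real.exp_le_exp.mpr key
  have c1 : (n.choose (j-1) : ℝ) ≤ (n:ℝ) ^ (j-1) / ((j-1)! : ℝ) := by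
    have := Nat.choose_le_pow_div (α := ℝ) (j-1) n
    push_cast at this ⊢
    exact this
  have c2 : (n.choose j : ℝ) ≤ (n:ℝ) ^ j / (j ! : ℝ) := by
    have := Nat.choose_le_pow_div (α := ℝ) j n
    push_cast at this ⊢
    exact this
  have hfj : (0:ℝ) < (j ! : ℝ) := by exact_mod_cast Nat.factorial_pos j
  have hfj1 : (0:ℝ) < ((j-1)! : ℝ) := by exact_mod_cast Nat.factorial_pos (j-1)
  have step : (n.choose k : ℝ) * (n.choose (k - 1) : ℝ) * x ^ m ≤
      ((n:ℝ) ^ (j-1) / ((j-1)! : ℝ)) * ((n:ℝ) ^ j / (j ! : ℝ)) * ((n:ℝ) ^ (2 * j + 1))⁻¹ := by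
    rw [e1, e2]
    apply mul_le_mul
    · apply mul_le_mul c1 c2 (by positivity) (by positivity)
    · exact hxm
    · positivity
    · positivity
  have hpow : (n:ℝ) ^ (j-1) * (n:ℝ) ^ j * (n:ℝ) ^ 2 = (n:ℝ) ^ (2*j+1) := by
    rw [← pow_add, ← pow_add]
    congr 1
    omega
  have heq : ((n:ℝ) ^ (j-1) / ((j-1)! : ℝ)) * ((n:ℝ) ^ j / (j ! : ℝ)) * ((n:ℝ) ^ (2 * j + 1))⁻¹ =
      (1 / (n:ℝ)^2) * (1 / ((j ! : ℝ) * ((j-1)! : ℝ))) := by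
    rw [← hpow]
    field_simp
  have hwge : (1:ℝ) / ((j ! : ℝ) * ((j-1)! : ℝ)) ≤ wfun j := by
    have h := wfun_ge j hj1
    push_cast at h
    exact h
  calc (n.choose k : ℝ) * (n.choose (k - 1) : ℝ) * x ^ m
      ≤ ((n:ℝ) ^ (j-1) / ((j-1)! : ℝ)) * ((n:ℝ) ^ j / (j ! : ℝ)) * ((n:ℝ) ^ (2 * j + 1))⁻¹ := step
    _ = (1 / (n:ℝ)^2) * (1 / ((j ! : ℝ) * ((j-1)! : ℝ))) := heq
    _ ≤ (1 / (n:ℝ)^2) * wfun j := by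
        apply mul_le_mul_of_nonneg_left hwge
        positivity


theorem qn_le_half (n : ℕ) (hn : 2 ≤ n) :
    ∑ k ∈ Finset.Icc 1 n, (n.choose k : ℝ) * (n.choose (k - 1) : ℝ) *
        (((k - 1 : ℕ) : ℝ) / (n : ℝ)) ^ (k * (3 * ⌈Real.log n⌉₊)) ≤ 1 / 2 := by
  rcases eq_or_lt_of_le hn with h2 | h3
  · -- n = 2
    subst h2
    have h1 : Real.log 2 ≤ 1 := by
      have he : (2:ℝ) ≤ Real.exp 1 := by nlinarith [Real.exp_one_gt_d9]
      calc Real.log 2 ≤ Real.log (Real.exp 1) := Real.log_le_log (by norm_num) he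
        _ = 1 := Real.log_exp 1
    have h0 : 0 < Real.log 2 := Real.log_pos (by norm_num)
    have hc : ⌈Real.log (2:ℕ)⌉₊ = 1 := by
      have hle : ⌈Real.log 2⌉₊ ≤ 1 := Nat.ceil_le.2 (by exact_mod_cast h1)
      have hge : 1 ≤ ⌈Real.log 2⌉₊ := Nat.ceil_pos.mpr h0
      have : ((2:ℕ):ℝ) = (2:ℝ) := by norm_num
      rw [this]
      omega
    rw [show Finset.Icc 1 2 = {1, 2} from rfl]
    rw [Finset.sum_insert (by decide), Finset.sum_singleton, hc]
    norm_num
  · -- 3 ≤ n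
    have hn3 : 3 ≤ n := h3
    have hN3 : (3:ℝ) ≤ (n:ℝ) := by exact_mod_cast hn3
    have hN : (0:ℝ) < n := by linarith
    set K := n / 2 with hK
    have hsplit : Finset.Icc 1 n = Finset.Ico 1 (n+1) := by rw [Finset.Ico_add_one_right_eq_Icc]
    rw [hsplit,
      ← Finset.sum_Ico_consecutive _ (show 1 ≤ K+1 by omega) (show K+1 ≤ n+1 by omega),
      ← Finset.sum_Ico_consecutive _ (show 1 ≤ 2 by omega) (show 2 ≤ K+1 by omega)]
    have hS0 : ∑ k ∈ Finset.Ico 1 2, (n.choose k : ℝ) * (n.choose (k - 1) : ℝ) *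
        (((k - 1 : ℕ) : ℝ) / (n : ℝ)) ^ (k * (3 * ⌈Real.log n⌉₊)) = 0 := by
      rw [show Finset.Ico 1 2 = {1} from rfl, Finset.sum_singleton]
      have hcp : 0 < ⌈Real.log (n:ℝ)⌉₊ := Nat.ceil_pos.mpr (Real.log_pos (by linarith))
      rw [show ((1 - 1 : ℕ) : ℝ) = 0 from by norm_num]
      rw [zero_div, zero_pow (by positivity)]
      ring
    have hS1 : ∑ k ∈ Finset.Ico 2 (K+1), (n.choose k : ℝ) * (n.choose (k - 1) : ℝ) *
        (((k - 1 : ℕ) : ℝ) / (n : ℝ)) ^ (k * (3 * ⌈Real.log n⌉₊)) ≤ (1/(n:ℝ)) * (3/5) := by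
      calc ∑ k ∈ Finset.Ico 2 (K+1), (n.choose k : ℝ) * (n.choose (k - 1) : ℝ) *
            (((k - 1 : ℕ) : ℝ) / (n : ℝ)) ^ (k * (3 * ⌈Real.log n⌉₊))
          ≤ ∑ k ∈ Finset.Ico 2 (K+1), (1 / (n : ℝ)) * (1 / 2 * (1 / 6) ^ (k - 2)) := by
            apply Finset.sum_le_sum
            intro k hk
            rw [Finset.mem_Ico] at hk
            exact termA n k (by omega) hk.1 (by omega)
        _ = (1 / (n : ℝ)) * ∑ k ∈ Finset.Ico 2 (K+1), (1 / 2 * ((1:ℝ) / 6) ^ (k - 2)) := by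
            rw [Finset.mul_sum]
        _ ≤ (1/(n:ℝ)) * (3/5) := by
            apply mul_le_mul_of_nonneg_left _ (by positivity)
            rw [Finset.sum_Ico_eq_sum_range]
            have : ∀ i ∈ Finset.range (K+1-2), (1:ℝ)/2 * (1/6)^((2+i)-2) = 1/2 * (1/6)^i := by
              intro i _
              congr 2
              omega
            rw [Finset.sum_congr rfl this, ← Finset.mul_sum]
            nlinarith [geo_sum (K+1-2)]
    have hS2 : ∑ k ∈ Finset.Ico (K+1) (n+1), (n.choose k : ℝ) * (n.choose (k - 1) : ℝ) *
        (((k - 1 : ℕ) : ℝ) / (n : ℝ)) ^ (k * (3 * ⌈Real.log n⌉₊)) ≤ (1/(n:ℝ)^2) * (8/5) := by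
      calc ∑ k ∈ Finset.Ico (K+1) (n+1), (n.choose k : ℝ) * (n.choose (k - 1) : ℝ) *
            (((k - 1 : ℕ) : ℝ) / (n : ℝ)) ^ (k * (3 * ⌈Real.log n⌉₊))
          ≤ ∑ k ∈ Finset.Ico (K+1) (n+1), (1 / (n : ℝ)^2) * wfun (n + 1 - k) := by
            apply Finset.sum_le_sum
            intro k hk
            rw [Finset.mem_Ico] at hk
            exact termB n k hn3 (by omega) (by omega)
        _ = (1 / (n : ℝ)^2) * ∑ k ∈ Finset.Ico (K+1) (n+1), wfun (n + 1 - k) := by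
            rw [Finset.mul_sum]
        _ ≤ (1/(n:ℝ)^2) * (8/5) := by
            apply mul_le_mul_of_nonneg_left _ (by positivity)
            rw [Finset.sum_Ico_eq_sum_range]
            have hrw : ∀ i ∈ Finset.range (n+1-(K+1)),
                wfun (n + 1 - (K+1+i)) = (fun i => wfun (i+1)) ((n+1-(K+1)) - 1 - i) := by
              intro i hi
              rw [Finset.mem_range] at hi
              simp only
              congr 1
              omega
            rw [Finset.sum_congr rfl hrw]
            exact le_trans (le_of_eq (Finset.sum_range_reflect (fun i => wfun (i+1)) _))
              (wfun_sum _)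
    have hinv1 : (1:ℝ)/(n:ℝ) ≤ 1/3 := by
      apply one_div_le_one_div_of_le (by norm_num) hN3
    have hinv2 : (1:ℝ)/(n:ℝ)^2 ≤ 1/9 := by
      apply one_div_le_one_div_of_le (by norm_num)
      nlinarith
    have hp1 : (0:ℝ) ≤ 1/(n:ℝ) := by positivity
    have hp2 : (0:ℝ) ≤ 1/(n:ℝ)^2 := by positivity
    rw [hS0]
    nlinarith [hS1, hS2]
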